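/- arXiv:2407.00479 — 5 statements merged into one kernel-verified Lean document; each statement's English description precedes it below -/
import Mathlib

section
/- Let M be a maximally monotone subset of B that is quasidense (equivalently, of type (NI)), and let b* ∈ B*. Then the following eight conditions are equivalent: (a) G_M(b*) ≤ 0 (i.e. b* ∈ M^♯); (b) G_M(b*) = 0; (c) (G_M □ q̃)(b*) = 0; (d) (G_M □ q̃)(b*) ≥ 0; (e) F_M(b*) ≤ 0; (f) F_M(b*) = 0; (g) (F_M □ q̃)(b*) = 0; (h) (F_M □ q̃)(b*) ≥ 0. -/
open NormedSpace

noncomputable section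

variable (E : Type*) [NormedAddCommGroup E] [NormedSpace ℝ E]

/-- `B = E × E*`. -/
abbrev BSp := E × StrongDual ℝ E

/-- `B* = E* × E**`. -/
abbrev BStar := StrongDual ℝ E × StrongDual ℝ (StrongDual ℝ E)

/-- `q(x, x*) = ⟨x, x*⟩`. -/
def qB (b : BSp E) : ℝ := b.2 b.1

/-- `r(b) = ½‖b‖² + q(b)`, where `‖(x,x*)‖² = ‖x‖² + ‖x*‖²`. -/
def rB (b : BSp E) : ℝ := (‖b.1‖ ^ 2 + ‖b.2‖ ^ 2) / 2 + qB E b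

/-- `q̃(y*, y**) = ⟨y*, y**⟩`. -/
def qS (p : BStar E) : ℝ := p.2 p.1

/-- `r̃(b*) = ½‖b*‖² + q̃(b*)`. -/
def rS (p : BStar E) : ℝ := (‖p.1‖ ^ 2 + ‖p.2‖ ^ 2) / 2 + qS E p

/-- The isometry `L(y, y*) = (y*, ŷ)`. -/
def LMap (b : BSp E) : BStar E := (b.2, inclusionInDoubleDual ℝ E b.1)

/-- A subset of `B` is monotone. -/
def IsMonot (A : Set (BSp E)) : Prop := ∀ d ∈ A, ∀ e ∈ A, 0 ≤ qB E (d - e)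

/-- A subset of `B` is maximally monotone. -/
def IsMaxMonot (A : Set (BSp E)) : Prop :=
  IsMonot E A ∧ ∀ A' : Set (BSp E), IsMonot E A' → A ⊆ A' → A' = A

/-- A subset of `B*` is monotone. -/
def IsMonotStar (N : Set (BStar E)) : Prop := ∀ d ∈ N, ∀ e ∈ N, 0 ≤ qS E (d - e)

/-- A subset of `B*` is maximally monotone. -/
def IsMaxMonotStar (N : Set (BStar E)) : Prop :=
  IsMonotStar E N ∧ ∀ N' : Set (BStar E), IsMonotStar E N' → N ⊆ N' → N' = N

/-- `A` is quasidense: `inf_{a ∈ A} r(a - b) = 0` for every `b ∈ B`. -/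
def Quasidense (A : Set (BSp E)) : Prop :=
  ∀ b : BSp E, (⨅ a ∈ A, (rB E (a - b) : EReal)) = 0

/-- `P_M(b) = −inf_{m ∈ M} q(m − b)`, an extended real. -/
def PFn (M : Set (BSp E)) (b : BSp E) : EReal := -(⨅ m ∈ M, (qB E (m - b) : EReal))

/-- `F_M(b*) = −inf_{b ∈ B} [P_M(b) + q̃(b* − Lb)]`. -/
def FFn (M : Set (BSp E)) (p : BStar E) : EReal :=
  -(⨅ b : BSp E, (PFn E M b + (qS E (p - LMap E b) : EReal)))

/-- `G_M(b*) = −inf_{m ∈ M} q̃(Lm − b*)`. -/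
def GFn (M : Set (BSp E)) (p : BStar E) : EReal :=
  -(⨅ m ∈ M, (qS E (LMap E m - p) : EReal))

/-- The Gossez extension `M^♯ = {b* : G_M(b*) ≤ 0}`. -/
def Sharp (M : Set (BSp E)) : Set (BStar E) := {p | GFn E M p ≤ 0}

/-- `M` is of type (NI): `G_M ≥ 0` on `B*`. -/
def TypeNI (M : Set (BSp E)) : Prop := ∀ p : BStar E, 0 ≤ GFn E M p

variable [CompleteSpace E] [Nontrivial E]

section ERealAux

lemma ENeg_nonpos_iff (x : EReal) : -x ≤ 0 ↔ 0 ≤ x := by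
  have h0 : (0 : EReal) = -0 := by simp
  rw [h0, EReal.neg_le_neg_iff, ← h0]

lemma ENeg_eq_zero_iff (x : EReal) : -x = 0 ↔ x = 0 := by
  constructor
  · intro h; have := congrArg (fun y : EReal => -y) h; simpa using this
  · intro h; simp [h]

lemma EA1 (x : EReal) (c : ℝ) (h : x ≤ (c : EReal)) : 0 ≤ -x + (c : EReal) := by
  induction x using EReal.rec with
  | bot => simp [EReal.top_add_coe]
  | coe r =>
      rw [show -(r : EReal) = ((-r : ℝ) : EReal) by simp, ← EReal.coe_add]
      rw [EReal.coe_le_coe_iff] at h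
      exact EReal.coe_nonneg.2 (by linarith)
  | top => exact absurd h (by simp)

lemma Ele_coe_of_forall (x : EReal) (Q : ℝ) (h : ∀ δ : ℝ, 0 < δ → x ≤ ((Q + δ : ℝ) : EReal)) :
    x ≤ (Q : EReal) := by
  induction x using EReal.rec with
  | bot => exact bot_le
  | coe r =>
      refine EReal.coe_le_coe_iff.2 (le_of_forall_pos_le_add fun δ hδ => ?_)
      exact EReal.coe_le_coe_iff.1 (h δ hδ)
  | top =>
      have := h 1 one_pos
      rw [top_le_iff] at this
      exact absurd this (EReal.coe_ne_top _)

end ERealAux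

section NormingAux

lemma exists_norming {F : Type*} [NormedAddCommGroup F] [NormedSpace ℝ F]
    (g : StrongDual ℝ F) {ξ : ℝ} (hξ : 0 < ξ) :
    ∃ u : F, ‖u‖ ≤ 1 ∧ ‖g‖ - ξ ≤ g u := by
  rcases le_or_gt ‖g‖ ξ with h | h
  · exact ⟨0, by simp, by simp; linarith⟩
  · obtain ⟨x, hx1, hx2⟩ := g.exists_lt_apply_of_lt_opNorm (show ‖g‖ - ξ < ‖g‖ by linarith)
    rcases le_or_gt 0 (g x) with hgx | hgx
    · exact ⟨x, hx1.le, by rw [Real.norm_eq_abs, abs_of_nonneg hgx] at hx2; linarith⟩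
    · refine ⟨-x, by simpa using hx1.le, ?_⟩
      rw [map_neg]
      rw [Real.norm_eq_abs, abs_of_neg hgx] at hx2
      linarith

end NormingAux

namespace QDProof

variable {E : Type*} [NormedAddCommGroup E] [NormedSpace ℝ E]

/-! Algebraic identities for the quadratic form `qS`. -/

lemma qS_neg (u : BStar E) : qS E (-u) = qS E u := by
  simp [qS, Prod.fst_neg, Prod.snd_neg, ContinuousLinearMap.neg_apply, map_neg]

lemma qS_zero : qS E 0 = 0 := by simp [qS]

lemma qS_LL (m b : BSp E) : qS E (LMap E m - LMap E b) = qB E (m - b) := by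
  simp only [qS, qB, LMap, Prod.fst_sub, Prod.snd_sub, ContinuousLinearMap.sub_apply, map_sub,
    NormedSpace.dual_def]
  ring

lemma qS_mid (u p r : BStar E) :
    qS E (p - r) = 2 * qS E (u - p) + 2 * qS E (u - r)
      - 4 * qS E (u - (2⁻¹ : ℝ) • (p + r)) := by
  simp only [qS, Prod.fst_sub, Prod.snd_sub, Prod.smul_fst, Prod.smul_snd, Prod.fst_add,
    Prod.snd_add, ContinuousLinearMap.sub_apply, ContinuousLinearMap.add_apply,
    ContinuousLinearMap.smul_apply, map_sub, map_add, map_smul, smul_eq_mul]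
  ring

lemma qS_seg (u p p' : BStar E) (t : ℝ) :
    qS E (u - (p' + t • (p - p'))) =
      (1 - t) * qS E (u - p') + t * qS E (u - p) + (t ^ 2 - t) * qS E (p - p') := by
  simp only [qS, Prod.fst_sub, Prod.snd_sub, Prod.smul_fst, Prod.smul_snd, Prod.fst_add,
    Prod.snd_add, ContinuousLinearMap.sub_apply, ContinuousLinearMap.add_apply,
    ContinuousLinearMap.smul_apply, map_sub, map_add, map_smul, smul_eq_mul]
  ring

lemma qS_smul (c : ℝ) (u : BStar E) : qS E (c • u) = c ^ 2 * qS E u := by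
  simp only [qS, Prod.smul_fst, Prod.smul_snd, ContinuousLinearMap.smul_apply, map_smul,
    smul_eq_mul]
  ring

lemma qS_decomp (m b : BSp E) (w : BStar E) :
    qS E (LMap E m - w) = qB E (m - b) + (b.2 - w.1) (m.1 - b.1)
      + (NormedSpace.inclusionInDoubleDual ℝ E b.1 - w.2) (m.2 - b.2)
      + qS E (LMap E b - w) := by
  simp only [qS, qB, LMap, Prod.fst_sub, Prod.snd_sub, ContinuousLinearMap.sub_apply, map_sub,
    NormedSpace.dual_def]
  ring

/-! Extraction of approximate minimizers from quasidensity. -/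

lemma qd_exists {M : Set (BSp E)} (hqd : Quasidense E M) (b : BSp E) {ε : ℝ} (hε : 0 < ε) :
    ∃ m ∈ M, rB E (m - b) < ε := by
  by_contra h
  push_neg at h
  have h1 : (ε : EReal) ≤ ⨅ a ∈ M, (rB E (a - b) : EReal) :=
    le_iInf₂_iff.2 fun m hm => EReal.coe_le_coe_iff.2 (h m hm)
  rw [hqd b] at h1
  exact absurd h1 (by simpa using not_le.2 (EReal.coe_lt_coe_iff.2 hε))

set_option maxHeartbeats 1000000 in
/-- The key analytic lemma: a quasidense monotone set is of type (NI), that is,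
`inf_{m ∈ M} q̃(Lm − w) ≤ 0` at every point `w` of `B*`. -/
lemma ni_of_quasidense {M : Set (BSp E)} (hqd : Quasidense E M) (w : BStar E) {κ : ℝ}
    (hκ : 0 < κ) : ∃ m ∈ M, qS E (LMap E m - w) < κ := by
  by_contra hcon
  push_neg at hcon
  set C : ℝ := ‖w.2‖ with hC
  have hC0 : 0 ≤ C := norm_nonneg w.2
  set ξ : ℝ := κ / (4 * (C + 1)) with hξdef
  have hξ : 0 < ξ := by positivity
  have hD : (0:ℝ) < 4 * (C + 1) := by positivity
  have hCξ : C * ξ ≤ κ / 4 := by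
    rw [hξdef, ← mul_div_assoc, div_le_div_iff₀ hD (by norm_num : (0:ℝ) < 4)]
    nlinarith
  obtain ⟨u, hu1, hu2⟩ := exists_norming w.2 hξ
  obtain ⟨m, hm, hrb⟩ := qd_exists hqd ((0 : E), w.1 + C • u) (show (0:ℝ) < κ/4 by linarith)
  have hS := hcon m hm
  have hdec := qS_decomp m ((0 : E), w.1 + C • u) w
  set X : ℝ := ‖m.1 - ((0 : E), w.1 + C • u).1‖ with hX
  set Y : ℝ := ‖m.2 - ((0 : E), w.1 + C • u).2‖ with hY
  have hX0 : 0 ≤ X := norm_nonneg _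
  have hY0 : 0 ≤ Y := norm_nonneg _
  have hb2 : (((0 : E), w.1 + C • u) : BSp E).2 - w.1 = C • u := by simp
  have hT1 : ((((0 : E), w.1 + C • u) : BSp E).2 - w.1) (m.1 - ((0 : E), w.1 + C • u).1)
      ≤ C * X := by
    calc ((((0 : E), w.1 + C • u) : BSp E).2 - w.1) (m.1 - ((0 : E), w.1 + C • u).1)
        ≤ ‖((((0 : E), w.1 + C • u) : BSp E).2 - w.1) (m.1 - ((0 : E), w.1 + C • u).1)‖ :=
          le_abs_self _
    _ ≤ ‖(((0 : E), w.1 + C • u) : BSp E).2 - w.1‖ * X := ContinuousLinearMap.le_opNorm _ _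
    _ ≤ C * X := by
        apply mul_le_mul_of_nonneg_right _ hX0
        rw [hb2, norm_smul, Real.norm_eq_abs, abs_of_nonneg hC0]
        nlinarith
  have hincl0 : NormedSpace.inclusionInDoubleDual ℝ E (((0 : E), w.1 + C • u) : BSp E).1 - w.2
      = -w.2 := by simp
  have hT2 : (NormedSpace.inclusionInDoubleDual ℝ E (((0 : E), w.1 + C • u) : BSp E).1 - w.2)
      (m.2 - (((0 : E), w.1 + C • u) : BSp E).2) ≤ C * Y := by
    rw [hincl0]
    calc (-w.2) (m.2 - (((0 : E), w.1 + C • u) : BSp E).2)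
        ≤ ‖(-w.2) (m.2 - (((0 : E), w.1 + C • u) : BSp E).2)‖ := le_abs_self _
    _ ≤ ‖(-w.2 : StrongDual ℝ (StrongDual ℝ E))‖ * Y :=
        ContinuousLinearMap.le_opNorm _ _
    _ = C * Y := by rw [ContinuousLinearMap.opNorm_neg]
  have hT3 : qS E (LMap E (((0 : E), w.1 + C • u) : BSp E) - w) ≤ -(C * (C - ξ)) := by
    have h3 : qS E (LMap E (((0 : E), w.1 + C • u) : BSp E) - w) = -(C * (w.2 u)) := by
      simp only [qS, LMap, Prod.fst_sub, Prod.snd_sub, ContinuousLinearMap.sub_apply, map_sub]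
      simp [map_smul, smul_eq_mul]
    rw [h3]
    have := mul_le_mul_of_nonneg_left hu2 hC0
    linarith
  have hqB : qB E (m - ((0 : E), w.1 + C • u)) ≤ κ / 4 - (X ^ 2 + Y ^ 2) / 2 := by
    have heq : rB E (m - ((0 : E), w.1 + C • u)) =
        (X ^ 2 + Y ^ 2) / 2 + qB E (m - ((0 : E), w.1 + C • u)) := by
      rw [rB, hX, hY, Prod.fst_sub, Prod.snd_sub]
    linarith [heq ▸ hrb]
  nlinarith [sq_nonneg (X - C), sq_nonneg (Y - C), hS, hdec, hT1, hT2, hT3, hqB, hCξ, hκ]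

/-- Monotonicity of the Gossez extension of a quasidense set (via the midpoint identity). -/
lemma sharp_mono {M : Set (BSp E)} (hqd : Quasidense E M) {P R : BStar E}
    (hP : ∀ m ∈ M, 0 ≤ qS E (LMap E m - P)) (hR : ∀ m ∈ M, 0 ≤ qS E (LMap E m - R)) :
    0 ≤ qS E (P - R) := by
  by_contra hneg
  push_neg at hneg
  obtain ⟨m, hm, hlt⟩ := ni_of_quasidense hqd ((2⁻¹ : ℝ) • (P + R))
    (show (0:ℝ) < -qS E (P - R) / 4 by linarith)
  have hid := qS_mid (LMap E m) P R
  have h1 := hP m hm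
  have h2 := hR m hm
  linarith

/-- The key quantitative inequality behind all the nontrivial implications. -/
lemma hard_real {M : Set (BSp E)} (hqd : Quasidense E M) {p : BStar E}
    (hp : ∀ m ∈ M, 0 ≤ qS E (LMap E m - p)) (p' : BStar E) {δ : ℝ} (hδ : 0 < δ) :
    ∃ m ∈ M, qS E (LMap E m - p') ≤ qS E (p - p') + δ := by
  set Q : ℝ := qS E (p - p') with hQ
  rcases le_or_gt 0 Q with hQ0 | hQ0
  · obtain ⟨m, hm, hlt⟩ := ni_of_quasidense hqd p' hδ
    exact ⟨m, hm, by linarith⟩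
  · by_contra hc
    push_neg at hc
    set δ' : ℝ := min δ (-Q) with hδ'def
    have hδ'0 : 0 < δ' := lt_min hδ (by linarith)
    set η : ℝ := Q + δ' with hη
    have hη0 : η ≤ 0 := by
      have : δ' ≤ -Q := min_le_right _ _
      linarith
    have hc' : ∀ m ∈ M, η ≤ qS E (LMap E m - p') := by
      intro m hm
      have h1 := hc m hm
      have : δ' ≤ δ := min_le_left _ _
      linarith
    set t : ℝ := η / Q with ht
    have hQne : Q ≠ 0 := ne_of_lt hQ0
    have htQ : t * Q = η := div_mul_cancel₀ _ hQne
    have ht0 : 0 ≤ t := by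
      rw [ht]
      exact div_nonneg_of_nonpos (by linarith) (by linarith)
    have ht1 : t < 1 := by
      rw [ht, div_lt_one_of_neg hQ0]
      linarith
    have hP'' : ∀ m ∈ M, 0 ≤ qS E (LMap E m - (p' + t • (p - p'))) := by
      intro m hm
      rw [qS_seg]
      have hA := hc' m hm
      have hB := hp m hm
      have ht2Q : t ^ 2 * Q = t * η := by rw [pow_two, mul_assoc, htQ]
      nlinarith [mul_le_mul_of_nonneg_left hA (show (0:ℝ) ≤ 1 - t by linarith),
        mul_nonneg ht0 hB]
    have hmono := sharp_mono hqd hp hP''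
    have hvec : p - (p' + t • (p - p')) = (1 - t) • (p - p') := by module
    rw [hvec, qS_smul] at hmono
    have h2 : (0:ℝ) < (1 - t) ^ 2 := pow_pos (by linarith) 2
    nlinarith [mul_pos h2 (neg_pos.2 hQ0)]

end QDProof

/-- for a quasidense maximally monotone `M` and `b* ∈ B*`, eight
conditions characterizing membership of the Gossez extension are equivalent. -/
theorem mem_sharp_tfae (M : Set (BSp E)) (hM : IsMaxMonot E M) (hqd : Quasidense E M)
    (p : BStar E) :
    [GFn E M p ≤ 0,
     GFn E M p = 0,
     (⨅ p' : BStar E, (GFn E M p' + (qS E (p - p') : EReal))) = 0,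
     0 ≤ ⨅ p' : BStar E, (GFn E M p' + (qS E (p - p') : EReal)),
     FFn E M p ≤ 0,
     FFn E M p = 0,
     (⨅ p' : BStar E, (FFn E M p' + (qS E (p - p') : EReal))) = 0,
     0 ≤ ⨅ p' : BStar E, (FFn E M p' + (qS E (p - p') : EReal))].TFAE := by
  classical
  have hmono := hM.1
  -- `P_M` vanishes on `M`
  have hP0 : ∀ m₀ ∈ M, PFn E M m₀ = 0 := by
    intro m₀ hm₀
    unfold PFn
    rw [ENeg_eq_zero_iff]
    apply le_antisymm
    · refine iInf₂_le_of_le m₀ hm₀ ?_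
      simp [qB, sub_self]
    · exact le_iInf₂ fun m hm => EReal.coe_nonneg.2 (hmono m hm m₀ hm₀)
  -- `G_M` vanishes on `L(M)`
  have hGLm : ∀ m₀ ∈ M, GFn E M (LMap E m₀) = 0 := by
    intro m₀ hm₀
    unfold GFn
    rw [ENeg_eq_zero_iff]
    apply le_antisymm
    · refine iInf₂_le_of_le m₀ hm₀ ?_
      rw [show qS E (LMap E m₀ - LMap E m₀) = 0 by rw [show LMap E m₀ - LMap E m₀ = 0 from sub_self (LMap E m₀), QDProof.qS_zero]]
      simp
    · refine le_iInf₂ fun m hm => EReal.coe_nonneg.2 ?_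
      rw [QDProof.qS_LL]
      exact hmono m hm m₀ hm₀
  -- `F_M` vanishes on `L(M)`
  have hFLm : ∀ m₀ ∈ M, FFn E M (LMap E m₀) = 0 := by
    intro m₀ hm₀
    unfold FFn
    rw [ENeg_eq_zero_iff]
    apply le_antisymm
    · refine iInf_le_of_le m₀ ?_
      rw [hP0 m₀ hm₀, zero_add,
        show qS E (LMap E m₀ - LMap E m₀) = 0 by rw [show LMap E m₀ - LMap E m₀ = 0 from sub_self (LMap E m₀), QDProof.qS_zero]]
      simp
    · refine le_iInf fun b => ?_
      unfold PFn
      apply EA1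
      refine iInf₂_le_of_le m₀ hm₀ ?_
      rw [show qS E (LMap E m₀ - LMap E b) = qB E (m₀ - b) from QDProof.qS_LL m₀ b]
  -- the first condition in real terms
  have h1A : GFn E M p ≤ 0 ↔ ∀ m ∈ M, 0 ≤ qS E (LMap E m - p) := by
    unfold GFn
    rw [ENeg_nonpos_iff, le_iInf₂_iff]
    exact ⟨fun h m hm => EReal.coe_nonneg.1 (h m hm),
      fun h m hm => EReal.coe_nonneg.2 (h m hm)⟩
  -- EReal forms of the hard inequality
  have hhardE : (∀ m ∈ M, 0 ≤ qS E (LMap E m - p)) → ∀ p' : BStar E,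
      (⨅ m ∈ M, (qS E (LMap E m - p') : EReal)) ≤ (qS E (p - p') : EReal) := by
    intro hA p'
    refine Ele_coe_of_forall _ _ fun δ hδ => ?_
    obtain ⟨m, hm, hle⟩ := QDProof.hard_real hqd hA p' hδ
    exact iInf₂_le_of_le m hm (EReal.coe_le_coe_iff.2 hle)
  have hhardJ : (∀ m ∈ M, 0 ≤ qS E (LMap E m - p)) → ∀ b : BSp E,
      (⨅ m ∈ M, (qB E (m - b) : EReal)) ≤ (qS E (p - LMap E b) : EReal) := by
    intro hA b
    refine Ele_coe_of_forall _ _ fun δ hδ => ?_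
    obtain ⟨m, hm, hle⟩ := QDProof.hard_real hqd hA (LMap E b) hδ
    rw [QDProof.qS_LL] at hle
    exact iInf₂_le_of_le m hm (EReal.coe_le_coe_iff.2 hle)
  tfae_have 1 → 2 := by
    intro h1
    have hA := h1A.1 h1
    unfold GFn
    rw [ENeg_eq_zero_iff]
    apply le_antisymm
    · have h := hhardE hA p
      rw [show p - p = 0 from sub_self p] at h
      rwa [QDProof.qS_zero, EReal.coe_zero] at h
    · exact le_iInf₂ fun m hm => EReal.coe_nonneg.2 (hA m hm)
  tfae_have 2 → 1 := fun h2 => le_of_eq h2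
  tfae_have 1 → 4 := by
    intro h1
    have hA := h1A.1 h1
    refine le_iInf fun p' => ?_
    unfold GFn
    exact EA1 _ _ (hhardE hA p')
  tfae_have 4 → 1 := by
    intro h4
    apply h1A.2
    intro m hm
    have h := le_iInf_iff.1 h4 (LMap E m)
    rw [hGLm m hm, zero_add] at h
    have h' := EReal.coe_nonneg.1 h
    rw [← neg_sub p (LMap E m), QDProof.qS_neg]
    exact h'
  tfae_have 1 → 3 := by
    intro h1
    apply le_antisymm
    · refine iInf_le_of_le p ?_
      rw [show p - p = 0 from sub_self p]
      rw [QDProof.qS_zero, EReal.coe_zero, add_zero, tfae_1_to_2 h1]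
    · exact tfae_1_to_4 h1
  tfae_have 3 → 4 := fun h3 => h3.ge
  tfae_have 1 → 5 := by
    intro h1
    have hA := h1A.1 h1
    unfold FFn
    rw [ENeg_nonpos_iff]
    refine le_iInf fun b => ?_
    unfold PFn
    exact EA1 _ _ (hhardJ hA b)
  tfae_have 5 → 1 := by
    intro h5
    apply h1A.2
    intro m hm
    unfold FFn at h5
    rw [ENeg_nonpos_iff] at h5
    have h := le_iInf_iff.1 h5 m
    rw [hP0 m hm, zero_add] at h
    have h' := EReal.coe_nonneg.1 h
    rw [← neg_sub p (LMap E m), QDProof.qS_neg]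
    exact h'
  tfae_have 1 → 6 := by
    intro h1
    have hA := h1A.1 h1
    have h2 := tfae_1_to_2 h1
    unfold FFn
    rw [ENeg_eq_zero_iff]
    apply le_antisymm
    · have hKI : (⨅ b : BSp E, (PFn E M b + (qS E (p - LMap E b) : EReal))) ≤
          ⨅ m ∈ M, (qS E (LMap E m - p) : EReal) := by
        refine le_iInf₂ fun m hm => ?_
        refine iInf_le_of_le m ?_
        rw [hP0 m hm, zero_add, ← neg_sub p (LMap E m), QDProof.qS_neg]
      have hI : (⨅ m ∈ M, (qS E (LMap E m - p) : EReal)) = 0 := by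
        have h2' := h2
        unfold GFn at h2'
        exact (ENeg_eq_zero_iff _).1 h2'
      exact hKI.trans hI.le
    · refine le_iInf fun b => ?_
      unfold PFn
      exact EA1 _ _ (hhardJ hA b)
  tfae_have 6 → 5 := fun h6 => le_of_eq h6
  tfae_have 4 → 8 := by
    intro h4
    refine le_iInf fun p' => ?_
    have hGF : GFn E M p' ≤ FFn E M p' := by
      unfold GFn FFn
      rw [EReal.neg_le_neg_iff]
      refine le_iInf₂ fun m hm => ?_
      refine iInf_le_of_le m ?_
      rw [hP0 m hm, zero_add, ← neg_sub p' (LMap E m), QDProof.qS_neg]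
    calc (0:EReal) ≤ GFn E M p' + (qS E (p - p') : EReal) := le_iInf_iff.1 h4 p'
    _ ≤ FFn E M p' + (qS E (p - p') : EReal) := add_le_add_left hGF _
  tfae_have 8 → 1 := by
    intro h8
    apply h1A.2
    intro m hm
    have h := le_iInf_iff.1 h8 (LMap E m)
    rw [hFLm m hm, zero_add] at h
    have h' := EReal.coe_nonneg.1 h
    rw [← neg_sub p (LMap E m), QDProof.qS_neg]
    exact h'
  tfae_have 8 → 7 := by
    intro h8
    apply le_antisymm _ h8
    refine iInf_le_of_le p ?_
    rw [show p - p = 0 from sub_self p]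
    rw [QDProof.qS_zero, EReal.coe_zero, add_zero,
      tfae_1_to_6 (tfae_8_to_1 h8)]
  tfae_have 7 → 8 := fun h7 => h7.ge
  tfae_finish
end
end

section
/- Let M be a maximally monotone subset of B. Then M = L⁻¹(M^♯); in particular, L(M) ⊆ M^♯. -/
open NormedSpace

noncomputable section

variable (E : Type*) [NormedAddCommGroup E] [NormedSpace ℝ E]

variable [CompleteSpace E] [Nontrivial E]

lemma qS_LMap_sub (b c : BSp E) : qS E (LMap E b - LMap E c) = qB E (b - c) := by
  simp only [qS, qB, LMap, Prod.snd_sub, Prod.fst_sub, ContinuousLinearMap.sub_apply,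
    NormedSpace.dual_def, map_sub]
  ring

/-- `M = L⁻¹(M^♯)`; in particular `L(M) ⊆ M^♯`. -/
theorem eq_preimage_sharp (M : Set (BSp E)) (hM : IsMaxMonot E M) :
    M = LMap E ⁻¹' Sharp E M ∧ LMap E '' M ⊆ Sharp E M := by
  have key : ∀ b : BSp E, LMap E b ∈ Sharp E M ↔ ∀ m ∈ M, 0 ≤ qB E (m - b) := by
    intro b
    simp only [Sharp, Set.mem_setOf_eq, GFn]
    rw [EReal.neg_le, neg_zero, le_iInf₂_iff]
    constructor
    · intro h m hm
      have := h m hm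
      rw [qS_LMap_sub] at this
      exact_mod_cast this
    · intro h m hm
      rw [qS_LMap_sub]
      exact_mod_cast h m hm
  have hpre : M = LMap E ⁻¹' Sharp E M := by
    apply Set.eq_of_subset_of_subset
    · intro m hm
      simp only [Set.mem_preimage]
      exact (key m).2 fun m' hm' => hM.1 m' hm' m hm
    · intro b hb
      have hb' : ∀ m ∈ M, 0 ≤ qB E (m - b) := (key b).1 hb
      have hmono : IsMonot E (insert b M) := by
        intro d hd e he
        rcases hd with rfl | hd <;> rcases he with rfl | he
        · simp [qB]
        · have := hb' e he
          have hq : qB E (d - e) = qB E (e - d) := by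
            simp only [qB, Prod.snd_sub, Prod.fst_sub, ContinuousLinearMap.sub_apply, map_sub]
            ring
          rw [hq]; exact this
        · exact hb' d hd
        · exact hM.1 d hd e he
      have := hM.2 (insert b M) hmono (Set.subset_insert b M)
      rw [← this]
      exact Set.mem_insert b M
  refine ⟨hpre, ?_⟩
  rw [Set.image_subset_iff, ← hpre]
end
end

section
/- Let M be a maximally monotone subset of B of type (NI), let d*, e* ∈ B*, and let λ, μ > 0 with λ + μ = 1. Then λ·G_M(d*) + μ·G_M(e*) + λμ·q̃(e* − d*) ≥ 0 and λ·F_M(d*) + μ·F_M(e*) + λμ·q̃(e* − d*) ≥ 0. Moreover, if G_M(e*) = 0 then (G_M □ q̃)(e*) = 0, and if F_M(e*) = 0 then (F_M □ q̃)(e*) = 0. -/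
open NormedSpace

noncomputable section

variable (E : Type*) [NormedAddCommGroup E] [NormedSpace ℝ E]

variable [CompleteSpace E] [Nontrivial E]

/-! ### Auxiliary lemmas -/

lemma qS_neg_aux (p : BStar E) : qS E (-p) = qS E p := by
  simp [qS]

lemma qS_zero_aux : qS E 0 = 0 := by
  simp [qS]

lemma qS_combo_aux (a b : BStar E) (l m : ℝ) (h : l + m = 1) :
    qS E (l • a + m • b) = l * qS E a + m * qS E b - l * m * qS E (a - b) := by
  have hm : m = 1 - l := by linarith
  subst hm
  simp only [qS, Prod.fst_add, Prod.snd_add, Prod.smul_fst, Prod.smul_snd,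
    Prod.fst_sub, Prod.snd_sub, ContinuousLinearMap.add_apply,
    ContinuousLinearMap.coe_smul', Pi.smul_apply, ContinuousLinearMap.sub_apply,
    map_add, map_smul, map_sub, smul_eq_mul]
  ring

lemma coe_mul_le_aux (l : ℝ) (hl : 0 < l) {x : ℝ} {y : EReal} (h : (x : EReal) ≤ y) :
    ((l * x : ℝ) : EReal) ≤ (l : EReal) * y := by
  induction y using EReal.rec with
  | bot => simp at h
  | coe r =>
      rw [← EReal.coe_mul]
      exact_mod_cast mul_le_mul_of_nonneg_left (by exact_mod_cast h) hl.le
  | top =>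
      rw [EReal.coe_mul_top_of_pos hl]
      exact le_top

lemma ereal_cases (x : EReal) : x = ⊥ ∨ (∃ r : ℝ, x = (r : EReal)) ∨ x = ⊤ := by
  induction x using EReal.rec with
  | bot => exact Or.inl rfl
  | coe r => exact Or.inr (Or.inl ⟨r, rfl⟩)
  | top => exact Or.inr (Or.inr rfl)

lemma ereal_neg_mono {a b : EReal} (h : b ≤ a) : -a ≤ -b :=
  EReal.neg_le.2 (by rwa [neg_neg])

lemma M_nonempty_aux (M : Set (BSp E)) (hNI : TypeNI E M) : M.Nonempty := by
  by_contra h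
  rw [Set.not_nonempty_iff_eq_empty] at h
  have h0 := hNI 0
  rw [GFn, h] at h0
  simp at h0

lemma G_le_of_mem (M : Set (BSp E)) {x : BSp E} (hx : x ∈ M) (p : BStar E) :
    ((-(qS E (LMap E x - p)) : ℝ) : EReal) ≤ GFn E M p := by
  rw [GFn, EReal.coe_neg, EReal.neg_le, neg_neg]
  exact iInf₂_le x hx

lemma G_ineq_aux (M : Set (BSp E)) (hNI : TypeNI E M) (d e : BStar E)
    (l m : ℝ) (hl : 0 < l) (hm : 0 < m) (hlm : l + m = 1) :
    0 ≤ (l : EReal) * GFn E M d + (m : EReal) * GFn E M e +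
        ((l * m * qS E (e - d) : ℝ) : EReal) := by
  obtain rfl : m = 1 - l := by linarith
  refine le_trans (hNI (l • d + (1 - l) • e))
    (EReal.neg_le.2 (le_iInf₂ fun x hx => EReal.neg_le.1 ?_))
  have hsplit : LMap E x - (l • d + (1 - l) • e)
      = l • (LMap E x - d) + (1 - l) • (LMap E x - e) := by
    module
  have key : qS E (LMap E x - (l • d + (1 - l) • e))
      = l * qS E (LMap E x - d) + (1 - l) * qS E (LMap E x - e)
        - l * (1 - l) * qS E (e - d) := by
    rw [hsplit, qS_combo_aux E _ _ l (1 - l) (by ring)]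
    congr 2
    · rw [show (LMap E x - d) - (LMap E x - e) = e - d by abel]
  have hreal : (-(qS E (LMap E x - (l • d + (1 - l) • e))) : ℝ)
      = l * (-(qS E (LMap E x - d))) + (1 - l) * (-(qS E (LMap E x - e)))
        + l * (1 - l) * qS E (e - d) := by
    rw [key]; ring
  rw [← EReal.coe_neg, hreal, EReal.coe_add, EReal.coe_add]
  exact add_le_add (add_le_add (coe_mul_le_aux l hl (G_le_of_mem E M hx d))
    (coe_mul_le_aux (1 - l) (by linarith) (G_le_of_mem E M hx e))) le_rfl

lemma P_nonpos_aux (M : Set (BSp E)) (hMon : IsMonot E M) {x : BSp E} (hx : x ∈ M) :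
    PFn E M x ≤ 0 := by
  rw [PFn, EReal.neg_le, neg_zero]
  exact le_iInf₂ fun y hy => EReal.coe_nonneg.2 (hMon y hy x hx)

lemma P_ne_bot_aux (M : Set (BSp E)) (hne : M.Nonempty) (b : BSp E) : PFn E M b ≠ ⊥ := by
  obtain ⟨x, hx⟩ := hne
  have h1 : (⨅ m ∈ M, (qB E (m - b) : EReal)) ≤ (qB E (x - b) : EReal) := iInf₂_le x hx
  rw [PFn]
  intro hcon
  have h2 : (⨅ m ∈ M, (qB E (m - b) : EReal)) = ⊤ := by
    rw [← neg_neg (⨅ m ∈ M, (qB E (m - b) : EReal)), hcon]; rfl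
  rw [h2] at h1
  exact EReal.coe_ne_top _ (top_le_iff.1 h1)

lemma F_ge_G_aux (M : Set (BSp E)) (hMon : IsMonot E M) (p : BStar E) :
    GFn E M p ≤ FFn E M p := by
  rw [GFn, FFn]
  refine ereal_neg_mono (le_iInf₂ fun x hx => ?_)
  refine le_trans (iInf_le _ x) ?_
  have h2 : qS E (p - LMap E x) = qS E (LMap E x - p) := by
    rw [show p - LMap E x = -(LMap E x - p) by abel, qS_neg_aux]
  calc PFn E M x + (qS E (p - LMap E x) : EReal)
      ≤ 0 + (qS E (p - LMap E x) : EReal) := add_le_add (P_nonpos_aux E M hMon hx) le_rfl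
    _ = (qS E (LMap E x - p) : EReal) := by rw [zero_add, h2]

lemma F_le_of_aux (M : Set (BSp E)) (b : BSp E) {r : ℝ} (hr : PFn E M b = (r : EReal))
    (p : BStar E) :
    ((-(r + qS E (p - LMap E b)) : ℝ) : EReal) ≤ FFn E M p := by
  rw [FFn, EReal.coe_neg, EReal.neg_le, neg_neg]
  refine le_trans (iInf_le _ b) ?_
  rw [hr, ← EReal.coe_add]

lemma F_ineq_aux (M : Set (BSp E)) (hMon : IsMonot E M) (hNI : TypeNI E M) (d e : BStar E)
    (l m : ℝ) (hl : 0 < l) (hm : 0 < m) (hlm : l + m = 1) :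
    0 ≤ (l : EReal) * FFn E M d + (m : EReal) * FFn E M e +
        ((l * m * qS E (e - d) : ℝ) : EReal) := by
  obtain rfl : m = 1 - l := by linarith
  have hne : M.Nonempty := M_nonempty_aux E M hNI
  refine le_trans (le_trans (hNI (l • d + (1 - l) • e)) (F_ge_G_aux E M hMon _))
    (EReal.neg_le.2 (le_iInf fun b => EReal.neg_le.1 ?_))
  rcases ereal_cases (PFn E M b) with hP | ⟨r, hP⟩ | hP
  · exact absurd hP (P_ne_bot_aux E M hne b)
  · rw [hP]
    have hsplit : (l • d + (1 - l) • e) - LMap E b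
        = l • (d - LMap E b) + (1 - l) • (e - LMap E b) := by
      module
    have key : qS E ((l • d + (1 - l) • e) - LMap E b)
        = l * qS E (d - LMap E b) + (1 - l) * qS E (e - LMap E b)
          - l * (1 - l) * qS E (e - d) := by
      rw [hsplit, qS_combo_aux E _ _ l (1 - l) (by ring)]
      congr 2
      · rw [show (d - LMap E b) - (e - LMap E b) = -(e - d) by abel, qS_neg_aux]
    have hreal : (-(r + qS E ((l • d + (1 - l) • e) - LMap E b)) : ℝ)
        = l * (-(r + qS E (d - LMap E b))) + (1 - l) * (-(r + qS E (e - LMap E b)))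
          + l * (1 - l) * qS E (e - d) := by
      rw [key]; ring
    rw [← EReal.coe_add, ← EReal.coe_neg, hreal, EReal.coe_add, EReal.coe_add]
    exact add_le_add (add_le_add (coe_mul_le_aux l hl (F_le_of_aux E M b hP d))
      (coe_mul_le_aux (1 - l) (by linarith) (F_le_of_aux E M b hP e))) le_rfl
  · rw [hP, EReal.top_add_coe, EReal.neg_top]
    exact bot_le

lemma real_limit_aux {g q : ℝ} (hg : 0 ≤ g)
    (h : ∀ l : ℝ, 0 < l → l < 1 → 0 ≤ l * g + l * (1 - l) * q) : 0 ≤ g + q := by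
  by_contra hc
  push_neg at hc
  have hq : q < 0 := by linarith
  set l := (g + q) / (2 * q) with hldef
  have h2q : 2 * q < 0 := by linarith
  have hl0 : 0 < l := div_pos_of_neg_of_neg (by linarith) h2q
  have keyl : l * (2 * q) = g + q := div_mul_cancel₀ _ (ne_of_lt h2q)
  have hl1 : l < 1 := by
    by_contra h1
    push_neg at h1
    nlinarith
  have hle := h l hl0 hl1
  have e2 : l * g + l * (1 - l) * q = l * (g + q) / 2 := by
    linear_combination (-(l / 2)) * keyl
  rw [e2] at hle
  have : l * (g + q) < 0 := mul_neg_of_pos_of_neg hl0 hc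
  linarith

/-- convexity-type inequalities for `G_M` and `F_M` when `M` is of
type (NI), and the consequent exactness statements for zeros. -/
theorem GFun_FFun_convex_ineq (M : Set (BSp E)) (hM : IsMaxMonot E M) (hNI : TypeNI E M)
    (dstar estar : BStar E) (l m : ℝ) (hl : 0 < l) (hm : 0 < m) (hlm : l + m = 1) :
    0 ≤ (l : EReal) * GFn E M dstar + (m : EReal) * GFn E M estar +
        ((l * m * qS E (estar - dstar) : ℝ) : EReal) ∧
    0 ≤ (l : EReal) * FFn E M dstar + (m : EReal) * FFn E M estar +
        ((l * m * qS E (estar - dstar) : ℝ) : EReal) ∧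
    (GFn E M estar = 0 → (⨅ p : BStar E, (GFn E M p + (qS E (estar - p) : EReal))) = 0) ∧
    (FFn E M estar = 0 → (⨅ p : BStar E, (FFn E M p + (qS E (estar - p) : EReal))) = 0) := by
  refine ⟨G_ineq_aux E M hNI dstar estar l m hl hm hlm,
          F_ineq_aux E M hM.1 hNI dstar estar l m hl hm hlm, ?_, ?_⟩
  · intro hGe
    refine le_antisymm ?_ ?_
    · refine le_trans (iInf_le _ estar) ?_
      rw [hGe, show estar - estar = 0 from sub_self estar, qS_zero_aux, zero_add, EReal.coe_zero]
    · refine le_iInf fun p => ?_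
      have h0 : 0 ≤ GFn E M p := hNI p
      rcases ereal_cases (GFn E M p) with hG | ⟨g, hG⟩ | hG
      · rw [hG] at h0; simp at h0
      · have hg : 0 ≤ g := by rw [hG] at h0; exact_mod_cast h0
        have hr : 0 ≤ g + qS E (estar - p) := by
          refine real_limit_aux hg fun l' hl0 hl1 => ?_
          have hI := G_ineq_aux E M hNI p estar l' (1 - l') hl0 (by linarith) (by ring)
          rw [hGe, hG, mul_zero, add_zero, ← EReal.coe_mul, ← EReal.coe_add] at hI
          exact_mod_cast hI
        rw [hG, ← EReal.coe_add]
        exact_mod_cast hr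
      · rw [hG, EReal.top_add_coe]
        exact le_top
  · intro hFe
    have hne : M.Nonempty := M_nonempty_aux E M hNI
    refine le_antisymm ?_ ?_
    · refine le_trans (iInf_le _ estar) ?_
      rw [hFe, show estar - estar = 0 from sub_self estar, qS_zero_aux, zero_add, EReal.coe_zero]
    · refine le_iInf fun p => ?_
      have h0 : 0 ≤ FFn E M p := le_trans (hNI p) (F_ge_G_aux E M hM.1 p)
      rcases ereal_cases (FFn E M p) with hF | ⟨g, hF⟩ | hF
      · rw [hF] at h0; simp at h0
      · have hg : 0 ≤ g := by rw [hF] at h0; exact_mod_cast h0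
        have hr : 0 ≤ g + qS E (estar - p) := by
          refine real_limit_aux hg fun l' hl0 hl1 => ?_
          have hI := F_ineq_aux E M hM.1 hNI p estar l' (1 - l') hl0 (by linarith) (by ring)
          rw [hFe, hF, mul_zero, add_zero, ← EReal.coe_mul, ← EReal.coe_add] at hI
          exact_mod_cast hI
        rw [hF, ← EReal.coe_add]
        exact_mod_cast hr
      · rw [hF, EReal.top_add_coe]
        exact le_top
end
end

section
/- Let M be a maximally monotone subset of B and a, b ∈ B. Then −q(b − a) ≤ 2·P_M(a) + 2·P_M(b) (as extended reals). -/
open NormedSpace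

noncomputable section

variable (E : Type*) [NormedAddCommGroup E] [NormedSpace ℝ E]

variable [CompleteSpace E] [Nontrivial E]


lemma qB_neg (u : BSp E) : qB E (-u) = qB E u := by
  simp [qB]

lemma qB_smul (r : ℝ) (w : BSp E) : qB E (r • w) = r ^ 2 * qB E w := by
  simp [qB, map_smul, smul_eq_mul]
  ring

lemma qB_par (u v : BSp E) :
    qB E (u + v) + qB E (u - v) = 2 * qB E u + 2 * qB E v := by
  simp [qB, ContinuousLinearMap.add_apply, ContinuousLinearMap.sub_apply, map_add, map_sub]
  ring

lemma key_inf (M : Set (BSp E)) (hM : IsMaxMonot E M) (c : BSp E) (ε : ℝ) (hε : 0 < ε) :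
    ∃ m ∈ M, qB E (m - c) < ε := by
  by_contra h
  push_neg at h
  have hmono : IsMonot E (M ∪ {c}) := by
    rintro d hd e he
    rcases hd with hd | hd <;> rcases he with he | he
    · exact hM.1 d hd e he
    · rcases he with rfl
      exact le_trans hε.le (h d hd)
    · rcases hd with rfl
      have h1 : d - e = -(e - d) := by abel
      rw [h1, qB_neg]
      exact le_trans hε.le (h e he)
    · rcases hd with rfl; rcases he with rfl
      simp [qB]
  have heq := hM.2 _ hmono Set.subset_union_left
  have hc : c ∈ M := by
    rw [← heq]; exact Set.mem_union_right _ rfl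
  have := h c hc
  simp [qB] at this
  linarith

/-- `−q(b − a) ≤ 2 P_M(a) + 2 P_M(b)` as extended reals. -/
theorem neg_qB_le_two_PFun_add (M : Set (BSp E)) (hM : IsMaxMonot E M) (a b : BSp E) :
    (-(qB E (b - a)) : EReal) ≤ 2 * PFn E M a + 2 * PFn E M b := by
  -- M is nonempty
  obtain ⟨m0, hm0⟩ : M.Nonempty := by
    by_contra h
    rw [Set.not_nonempty_iff_eq_empty] at h
    have hmono : IsMonot E ({0} : Set (BSp E)) := by
      rintro d rfl e rfl
      simp [qB]
    have := hM.2 _ hmono (by rw [h]; exact Set.empty_subset _)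
    rw [h] at this
    exact absurd this (by simp)
  set Ia : EReal := ⨅ m ∈ M, (qB E (m - a) : EReal) with hIa_def
  set Ib : EReal := ⨅ m ∈ M, (qB E (m - b) : EReal) with hIb_def
  have hIa_le : Ia ≤ (qB E (m0 - a) : EReal) := iInf₂_le m0 hm0
  have hIb_le : Ib ≤ (qB E (m0 - b) : EReal) := iInf₂_le m0 hm0
  have hIa_ne_top : Ia ≠ ⊤ := fun h => by simp [h] at hIa_le
  have hIb_ne_top : Ib ≠ ⊤ := fun h => by simp [h] at hIb_le
  have hPa : PFn E M a = -Ia := rfl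
  have hPb : PFn E M b = -Ib := rfl
  have two_mul_ne_bot : ∀ x : EReal, x ≠ ⊥ → (2 : EReal) * x ≠ ⊥ := by
    intro x hx
    induction x using EReal.rec with
    | bot => exact absurd rfl hx
    | coe r =>
        rw [show (2 : EReal) * (r : EReal) = ((2 * r : ℝ) : EReal) by norm_cast]
        exact EReal.coe_ne_bot _
    | top =>
        rw [EReal.mul_top_of_pos (by norm_num)]
        simp
  by_cases hbota : Ia = ⊥
  · have : 2 * PFn E M a = ⊤ := by
      rw [hPa, hbota, EReal.neg_bot, EReal.mul_top_of_pos (by norm_num)]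
    rw [this, EReal.top_add_of_ne_bot]
    · exact le_top
    · apply two_mul_ne_bot
      rw [hPb]
      simp [hIb_ne_top]
  by_cases hbotb : Ib = ⊥
  · have : 2 * PFn E M b = ⊤ := by
      rw [hPb, hbotb]
      rw [EReal.neg_bot, EReal.mul_top_of_pos (by norm_num)]
    rw [this, EReal.add_top_of_ne_bot]
    · exact le_top
    · apply two_mul_ne_bot
      rw [hPa]
      simp [hIa_ne_top]
  -- both finite
  obtain ⟨ra, hra⟩ : ∃ r : ℝ, Ia = (r : EReal) := ⟨Ia.toReal, (EReal.coe_toReal hIa_ne_top hbota).symm⟩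
  obtain ⟨rb, hrb⟩ : ∃ r : ℝ, Ib = (r : EReal) := ⟨Ib.toReal, (EReal.coe_toReal hIb_ne_top hbotb).symm⟩
  have hcore : 2 * ra + 2 * rb ≤ qB E (b - a) := by
    refine le_of_forall_pos_le_add ?_
    intro ε hε
    obtain ⟨m, hm, hmc⟩ := key_inf E M hM ((2⁻¹ : ℝ) • (a + b)) (ε / 4) (by positivity)
    have h1 : ra ≤ qB E (m - a) := by
      have : Ia ≤ (qB E (m - a) : EReal) := iInf₂_le m hm
      rw [hra] at this
      exact_mod_cast this
    have h2 : rb ≤ qB E (m - b) := by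
      have : Ib ≤ (qB E (m - b) : EReal) := iInf₂_le m hm
      rw [hrb] at this
      exact_mod_cast this
    have hpar := qB_par E (m - a) (m - b)
    have heq1 : (m - a) - (m - b) = b - a := by abel
    have heq2 : (m - a) + (m - b) = (2 : ℝ) • (m - (2⁻¹ : ℝ) • (a + b)) := by
      rw [smul_sub, smul_smul]
      norm_num
      module
    rw [heq1, heq2, qB_smul] at hpar
    nlinarith [hmc]
  rw [hPa, hPb, hra, hrb]
  have hcast : 2 * -((ra : EReal)) + 2 * -((rb : EReal)) = ((2 * -ra + 2 * -rb : ℝ) : EReal) := by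
    norm_cast
  rw [hcast]
  exact_mod_cast (by linarith : -(qB E (b - a)) ≤ 2 * -ra + 2 * -rb)
end
end

section
/- Let M be a maximally monotone subset of B. Then F_M(Lb) = −(P_M □ q)(b) for every b ∈ B, and F_M(Lm) = 0 for every m ∈ M. -/
open NormedSpace

noncomputable section

variable (E : Type*) [NormedAddCommGroup E] [NormedSpace ℝ E]

variable [CompleteSpace E] [Nontrivial E]

/-- `F_M ∘ L = −(P_M □ q)` on `B` and `F_M ∘ L = 0` on `M`. -/
theorem FFun_comp_LMap (M : Set (BSp E)) (hM : IsMaxMonot E M) :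
    (∀ b : BSp E, FFn E M (LMap E b) =
        -(⨅ y : BSp E, (PFn E M y + (qB E (b - y) : EReal)))) ∧
      ∀ m ∈ M, FFn E M (LMap E m) = 0 := by
  have hq : ∀ b y : BSp E, qS E (LMap E b - LMap E y) = qB E (b - y) := by
    intro b y
    simp [qS, qB, LMap, Prod.sub_def, map_sub, ContinuousLinearMap.sub_apply,
      NormedSpace.inclusionInDoubleDual]
    ring
  have hP : ∀ m ∈ M, PFn E M m = 0 := by
    intro m hm
    unfold PFn
    have h : (⨅ m' ∈ M, (qB E (m' - m) : EReal)) = 0 := by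
      apply le_antisymm
      · have := iInf₂_le (f := fun m' (_ : m' ∈ M) => (qB E (m' - m) : EReal)) m hm
        simpa [qB] using this
      · exact le_iInf₂ fun m' hm' => by exact_mod_cast hM.1 m' hm' m hm
    rw [h, neg_zero]
  refine ⟨fun b => ?_, fun m hm => ?_⟩
  · unfold FFn
    congr 1
    exact iInf_congr fun y => by rw [hq]
  · have h0 : (⨅ y : BSp E, (PFn E M y + (qS E (LMap E m - LMap E y) : EReal))) = 0 := by
      apply le_antisymm
      · have := iInf_le (fun y : BSp E => PFn E M y + (qS E (LMap E m - LMap E y) : EReal)) m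
        simpa [hP m hm, hq, qB] using this
      · refine le_iInf fun y => ?_
        rw [hq]
        have h1 : (⨅ m' ∈ M, (qB E (m' - y) : EReal)) ≤ (qB E (m - y) : EReal) :=
          iInf₂_le m hm
        have h2 : -((qB E (m - y) : ℝ) : EReal) ≤ PFn E M y := by
          unfold PFn
          exact EReal.neg_le_neg_iff.mpr h1
        calc (0 : EReal) = -((qB E (m - y) : ℝ) : EReal) + ((qB E (m - y) : ℝ) : EReal) := by
              rw [← EReal.coe_neg, ← EReal.coe_add]; norm_num
          _ ≤ PFn E M y + ((qB E (m - y) : ℝ) : EReal) := add_le_add_left h2 _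
    unfold FFn
    rw [h0, neg_zero]
end
end
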